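/- Let N > 0, U = (N/(16(1+δ)))^{1/3} and V = U^{5/6} with δ = 10^{-4}. Then the number of integer 5-tuples-type sum J(n) = Σ_{m₁+m₂+m₃+m₄+m₅=n, U³<m₂,m₃≤8U³, V³<m₄,m₅≤8V³, m₁≥1} (m₂m₃m₄m₅)^{-2/3} satisfies J(n) ≫ U²V = N^{11/9}·(16(1+δ))^{-11/27} up to absolute constants, for every integer n with (1-η)N ≤ n ≤ N and η sufficiently small. -/

import Mathlib

set_option maxHeartbeats 1000000


open Finset
open scoped Classical

/-- The weighted count
`J(n) = ∑_{m₁+⋯+m₅ = n, U³ < m₂,m₃ ≤ 8U³, V³ < m₄,m₅ ≤ 8V³, m₁ ≥ 1} (m₂m₃m₄m₅)^{-2/3}`,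
parametrized by the 4-tuple `(m₂,m₃,m₄,m₅)` (then `m₁ = n - m₂ - m₃ - m₄ - m₅ ≥ 1`). -/
noncomputable def J (U V : ℝ) (n : ℕ) : ℝ :=
  ∑ m ∈ (Fintype.piFinset fun _ : Fin 4 => Finset.range (n + 1)).filter
      (fun m =>
        (U ^ 3 < (m 0 : ℝ) ∧ (m 0 : ℝ) ≤ 8 * U ^ 3) ∧
        (U ^ 3 < (m 1 : ℝ) ∧ (m 1 : ℝ) ≤ 8 * U ^ 3) ∧
        (V ^ 3 < (m 2 : ℝ) ∧ (m 2 : ℝ) ≤ 8 * V ^ 3) ∧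
        (V ^ 3 < (m 3 : ℝ) ∧ (m 3 : ℝ) ≤ 8 * V ^ 3) ∧
        m 0 + m 1 + m 2 + m 3 < n),
    ((m 0 * m 1 * m 2 * m 3 : ℕ) : ℝ) ^ (-(2/3) : ℝ)

theorem singular_integral_lower_bound :
    ∃ c : ℝ, 0 < c ∧ ∃ η₀ : ℝ, 0 < η₀ ∧ η₀ < 1 ∧
      ∀ η : ℝ, 0 < η → η ≤ η₀ → ∃ N₀ : ℝ, ∀ N : ℝ, N₀ ≤ N →
        ∀ n : ℕ, (1 - η) * N ≤ (n : ℝ) → (n : ℝ) ≤ N →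
          c * ((N / (16 * (1 + 10 ^ (-4 : ℤ)))) ^ ((1 : ℝ)/3)) ^ 2 *
              ((N / (16 * (1 + 10 ^ (-4 : ℤ)))) ^ ((1 : ℝ)/3)) ^ ((5 : ℝ)/6)
            ≤ J ((N / (16 * (1 + 10 ^ (-4 : ℤ)))) ^ ((1 : ℝ)/3))
                (((N / (16 * (1 + 10 ^ (-4 : ℤ)))) ^ ((1 : ℝ)/3)) ^ ((5 : ℝ)/6)) n := by
  refine ⟨1/512, by norm_num, 1/2, by norm_num, by norm_num, ?_⟩
  intro η hη hη2
  refine ⟨10^6, ?_⟩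
  intro N hN n hn1 hn2
  have hNpos : (0:ℝ) < N := by linarith [show (0:ℝ) < 10^6 by norm_num]
  set X : ℝ := N / (16 * (1 + 10 ^ (-4 : ℤ))) with hXdef
  have hd : (10:ℝ)^(-4:ℤ) = 1/10000 := by norm_num
  have hden : (0:ℝ) < 16*(1+10^(-4:ℤ)) := by rw [hd]; norm_num
  have hXN : N = X * (16*(1+10^(-4:ℤ))) := (div_mul_cancel₀ _ hden.ne').symm
  have hX16 : (16:ℝ) ≤ X := by
    rw [hXdef, le_div_iff₀ hden, hd]
    norm_num
    linarith
  have hX0 : (0:ℝ) ≤ X := by linarith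
  have hXpos : (0:ℝ) < X := by linarith
  have hX1 : (1:ℝ) ≤ X := by linarith
  set U : ℝ := X ^ ((1:ℝ)/3) with hUdef
  set V : ℝ := U ^ ((5:ℝ)/6) with hVdef
  have hU3 : U ^ 3 = X := by
    rw [hUdef, ← Real.rpow_natCast (X ^ ((1:ℝ)/3)) 3, ← Real.rpow_mul hX0]
    norm_num
  have hV3 : V ^ 3 = X ^ ((5:ℝ)/6) := by
    rw [hVdef, hUdef, ← Real.rpow_natCast _ 3, ← Real.rpow_mul hX0, ← Real.rpow_mul hX0]
    norm_num
  have hU2 : U ^ 2 = X ^ ((2:ℝ)/3) := by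
    rw [hUdef, ← Real.rpow_natCast (X ^ ((1:ℝ)/3)) 2, ← Real.rpow_mul hX0]
    norm_num
  have hVeq : V = X ^ ((5:ℝ)/18) := by
    rw [hVdef, hUdef, ← Real.rpow_mul hX0]; norm_num
  set Y : ℝ := X ^ ((5:ℝ)/6) with hYdef
  have hYpos : (0:ℝ) < Y := Real.rpow_pos_of_pos hXpos _
  have hY2 : (2:ℝ) ≤ Y := by
    have h1 : (16:ℝ) ^ ((1:ℝ)/4) ≤ (16:ℝ) ^ ((5:ℝ)/6) :=
      Real.rpow_le_rpow_of_exponent_le (by norm_num) (by norm_num)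
    have h2 : (16:ℝ) ^ ((5:ℝ)/6) ≤ X ^ ((5:ℝ)/6) :=
      Real.rpow_le_rpow (by norm_num) hX16 (by norm_num)
    have h3 : (16:ℝ) ^ ((1:ℝ)/4) = 2 := by
      rw [show (16:ℝ) = 2 ^ (4:ℕ) by norm_num, ← Real.rpow_natCast 2 4,
        ← Real.rpow_mul (by norm_num)]
      norm_num
    rw [hYdef]; linarith
  have hYX : Y ≤ X := by
    have := Real.rpow_le_rpow_of_exponent_le hX1 (show (5:ℝ)/6 ≤ 1 by norm_num)
    rwa [Real.rpow_one] at this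
  -- the box
  set K1 : Finset ℕ := Finset.Icc (⌊X⌋₊ + 1) ⌊2*X⌋₊ with hK1def
  set K2 : Finset ℕ := Finset.Icc (⌊Y⌋₊ + 1) ⌊2*Y⌋₊ with hK2def
  set B : Finset (Fin 4 → ℕ) := Fintype.piFinset (fun i => ![K1, K1, K2, K2] i) with hBdef
  -- bounds for members of K1/K2
  have hK1mem : ∀ m : ℕ, m ∈ K1 → X < (m:ℝ) ∧ (m:ℝ) ≤ 2*X := by
    intro m hm
    rw [hK1def, Finset.mem_Icc] at hm
    constructor
    · calc X < ⌊X⌋₊ + 1 := Nat.lt_floor_add_one X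
        _ ≤ (m:ℝ) := by exact_mod_cast hm.1
    · calc (m:ℝ) ≤ ⌊2*X⌋₊ := by exact_mod_cast hm.2
        _ ≤ 2*X := Nat.floor_le (by linarith)
  have hK2mem : ∀ m : ℕ, m ∈ K2 → Y < (m:ℝ) ∧ (m:ℝ) ≤ 2*Y := by
    intro m hm
    rw [hK2def, Finset.mem_Icc] at hm
    constructor
    · calc Y < ⌊Y⌋₊ + 1 := Nat.lt_floor_add_one Y
        _ ≤ (m:ℝ) := by exact_mod_cast hm.1
    · calc (m:ℝ) ≤ ⌊2*Y⌋₊ := by exact_mod_cast hm.2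
        _ ≤ 2*Y := Nat.floor_le (by linarith)
  have hNn : N/2 ≤ (n:ℝ) := by nlinarith
  have hsum_lt : 4*X + 4*Y < (n:ℝ) := by
    have h8X : 8*X < N/2 := by
      rw [hd] at hXN
      nlinarith
    linarith
  -- B is a subset of the filtered set
  have hsub : B ⊆ (Fintype.piFinset fun _ : Fin 4 => Finset.range (n + 1)).filter
      (fun m =>
        (U ^ 3 < (m 0 : ℝ) ∧ (m 0 : ℝ) ≤ 8 * U ^ 3) ∧
        (U ^ 3 < (m 1 : ℝ) ∧ (m 1 : ℝ) ≤ 8 * U ^ 3) ∧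
        (V ^ 3 < (m 2 : ℝ) ∧ (m 2 : ℝ) ≤ 8 * V ^ 3) ∧
        (V ^ 3 < (m 3 : ℝ) ∧ (m 3 : ℝ) ≤ 8 * V ^ 3) ∧
        m 0 + m 1 + m 2 + m 3 < n) := by
    intro m hm
    rw [hBdef, Fintype.mem_piFinset] at hm
    have h0 := hK1mem _ (by simpa using hm 0)
    have h1 := hK1mem _ (by simpa using hm 1)
    have h2 := hK2mem _ (by simpa using hm 2)
    have h3 := hK2mem _ (by simpa using hm 3)
    have hslt : m 0 + m 1 + m 2 + m 3 < n := by
      have : ((m 0 + m 1 + m 2 + m 3 : ℕ):ℝ) < (n:ℝ) := by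
        push_cast
        linarith [h0.2, h1.2, h2.2, h3.2]
      exact_mod_cast this
    rw [Finset.mem_filter]
    refine ⟨Fintype.mem_piFinset.2 fun i => Finset.mem_range.2 ?_, ?_, ?_, ?_, ?_, hslt⟩
    · fin_cases i
      · show m 0 < n + 1; omega
      · show m 1 < n + 1; omega
      · show m 2 < n + 1; omega
      · show m 3 < n + 1; omega
    · exact ⟨by rw [hU3]; exact h0.1, by rw [hU3]; linarith [h0.2]⟩
    · exact ⟨by rw [hU3]; exact h1.1, by rw [hU3]; linarith [h1.2]⟩
    · exact ⟨by rw [hV3]; exact h2.1, by rw [hV3]; linarith [h2.2]⟩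
    · exact ⟨by rw [hV3]; exact h3.1, by rw [hV3]; linarith [h3.2]⟩
  -- weight lower bound on B
  set w : ℝ := (16 * X^2 * Y^2) ^ (-(2/3) : ℝ) with hwdef
  have hwpos : 0 < w := Real.rpow_pos_of_pos (by positivity) _
  have hweight : ∀ m ∈ B, w ≤ ((m 0 * m 1 * m 2 * m 3 : ℕ) : ℝ) ^ (-(2/3) : ℝ) := by
    intro m hm
    rw [hBdef, Fintype.mem_piFinset] at hm
    have h0 := hK1mem _ (by simpa using hm 0)
    have h1 := hK1mem _ (by simpa using hm 1)
    have h2 := hK2mem _ (by simpa using hm 2)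
    have h3 := hK2mem _ (by simpa using hm 3)
    have hp0 : (0:ℝ) < m 0 := by linarith [h0.1]
    have hp1 : (0:ℝ) < m 1 := by linarith [h1.1]
    have hp2 : (0:ℝ) < m 2 := by linarith [h2.1]
    have hp3 : (0:ℝ) < m 3 := by linarith [h3.1]
    have hP : ((m 0 * m 1 * m 2 * m 3 : ℕ):ℝ) ≤ 16 * X^2 * Y^2 := by
      push_cast
      have hXnn : (0:ℝ) ≤ 2*X := by linarith
      have a1 : (m 0:ℝ) * m 1 ≤ (2*X)*(2*X) := mul_le_mul h0.2 h1.2 hp1.le hXnn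
      have a2 : (m 0:ℝ) * m 1 * m 2 ≤ (2*X)*(2*X)*(2*Y) :=
        mul_le_mul a1 h2.2 hp2.le (by nlinarith)
      have a3 : (m 0:ℝ) * m 1 * m 2 * m 3 ≤ (2*X)*(2*X)*(2*Y)*(2*Y) :=
        mul_le_mul a2 h3.2 hp3.le (by nlinarith)
      calc (m 0:ℝ) * m 1 * m 2 * m 3 ≤ (2*X)*(2*X)*(2*Y)*(2*Y) := a3
        _ = 16 * X^2 * Y^2 := by ring
    have hPpos : (0:ℝ) < ((m 0 * m 1 * m 2 * m 3 : ℕ):ℝ) := by push_cast; positivity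
    exact Real.rpow_le_rpow_of_nonpos hPpos hP (by norm_num)
  -- card bound
  have hcard1 : X - 1 ≤ (K1.card : ℝ) := by
    rw [hK1def, Nat.card_Icc]
    have hle : ⌊X⌋₊ + 1 ≤ ⌊2*X⌋₊ + 1 := by
      have := Nat.floor_le_floor (R := ℝ) (show X ≤ 2*X by linarith)
      omega
    rw [Nat.cast_sub hle]
    push_cast
    have h1 : 2*X - 1 < (⌊2*X⌋₊ : ℝ) := Nat.sub_one_lt_floor _
    have h2 : (⌊X⌋₊ : ℝ) ≤ X := Nat.floor_le hX0
    linarith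
  have hcard2 : Y - 1 ≤ (K2.card : ℝ) := by
    rw [hK2def, Nat.card_Icc]
    have hle : ⌊Y⌋₊ + 1 ≤ ⌊2*Y⌋₊ + 1 := by
      have := Nat.floor_le_floor (R := ℝ) (show Y ≤ 2*Y by linarith)
      omega
    rw [Nat.cast_sub hle]
    push_cast
    have h1 : 2*Y - 1 < (⌊2*Y⌋₊ : ℝ) := Nat.sub_one_lt_floor _
    have h2 : (⌊Y⌋₊ : ℝ) ≤ Y := Nat.floor_le hYpos.le
    linarith
  have hcardB : (X/2)^2 * (Y/2)^2 ≤ (B.card : ℝ) := by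
    have : B.card = K1.card * K1.card * K2.card * K2.card := by
      rw [hBdef, Fintype.card_piFinset, Fin.prod_univ_four]
      simp [mul_assoc]
    rw [this]
    push_cast
    have e1 : X/2 ≤ X - 1 := by linarith
    have e2 : Y/2 ≤ Y - 1 := by linarith
    have c1 : X/2 ≤ (K1.card:ℝ) := le_trans e1 hcard1
    have c2 : Y/2 ≤ (K2.card:ℝ) := le_trans e2 hcard2
    have hx2 : (0:ℝ) ≤ X/2 := by linarith
    have hy2 : (0:ℝ) ≤ Y/2 := by linarith
    calc (X/2)^2 * (Y/2)^2 = (X/2)*(X/2)*(Y/2)*(Y/2) := by ring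
      _ ≤ (K1.card:ℝ)*(K1.card:ℝ)*(K2.card:ℝ)*(K2.card:ℝ) := by
          apply mul_le_mul (mul_le_mul (mul_le_mul c1 c1 hx2 (Nat.cast_nonneg _))
            c2 hy2 (mul_nonneg (Nat.cast_nonneg _) (Nat.cast_nonneg _))) c2 hy2 (mul_nonneg (mul_nonneg (Nat.cast_nonneg _) (Nat.cast_nonneg _)) (Nat.cast_nonneg _))
  -- put it together
  have hJge : (B.card : ℝ) * w ≤ J U V n := by
    rw [J]
    calc (B.card : ℝ) * w = B.card • w := by rw [nsmul_eq_mul]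
      _ ≤ ∑ m ∈ B, ((m 0 * m 1 * m 2 * m 3 : ℕ) : ℝ) ^ (-(2/3) : ℝ) :=
          Finset.card_nsmul_le_sum B _ w hweight
      _ ≤ _ := Finset.sum_le_sum_of_subset_of_nonneg hsub
          (fun m _ _ => Real.rpow_nonneg (by positivity) _)
  have hmain : (1:ℝ)/512 * U^2 * V ≤ (X/2)^2 * (Y/2)^2 * w := by
    have hw16 : (1:ℝ)/16 * (X ^ ((11:ℝ)/3)) ^ (-(2/3):ℝ) ≤ w := by
      rw [hwdef]
      have hA : 16 * X^2 * Y^2 = 16 * X ^ ((11:ℝ)/3) := by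
        rw [hYdef, ← Real.rpow_natCast (X ^ ((5:ℝ)/6)) 2, ← Real.rpow_mul hX0,
          ← Real.rpow_natCast X 2, mul_assoc, ← Real.rpow_add hXpos]
        norm_num
      rw [hA, Real.mul_rpow (by norm_num) (Real.rpow_nonneg hX0 _)]
      have : (1:ℝ)/16 ≤ (16:ℝ) ^ (-(2/3):ℝ) := by
        have h := Real.rpow_le_rpow_of_exponent_le (show (1:ℝ) ≤ 16 by norm_num)
          (show (-1:ℝ) ≤ -(2/3) by norm_num)
        rw [Real.rpow_neg_one] at h
        linarith
      exact mul_le_mul_of_nonneg_right this (Real.rpow_nonneg (Real.rpow_nonneg hX0 _) _)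
    have hXw : (X ^ ((11:ℝ)/3)) ^ (-(2/3):ℝ) = X ^ (-(22:ℝ)/9) := by
      rw [← Real.rpow_mul hX0]; norm_num
    have hprod : (X/2)^2 * (Y/2)^2 = (1:ℝ)/16 * X ^ ((11:ℝ)/3) := by
      rw [hYdef, div_pow X 2 2, div_pow (X ^ ((5:ℝ)/6)) 2 2, ← Real.rpow_natCast (X ^ ((5:ℝ)/6)) 2,
        ← Real.rpow_mul hX0, ← Real.rpow_natCast X 2, div_mul_div_comm,
        ← Real.rpow_add hXpos]
      norm_num
      ring
    calc (1:ℝ)/512 * U^2 * V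
        = 1/512 * X ^ ((17:ℝ)/18) := by
          rw [hU2, hVeq, mul_assoc, ← Real.rpow_add hXpos]; norm_num
      _ ≤ 1/256 * X ^ ((11:ℝ)/9) := by
          have hX5 : (2:ℝ) ≤ X ^ ((5:ℝ)/18) := by
            have h1 : (16:ℝ) ^ ((1:ℝ)/4) ≤ (16:ℝ) ^ ((5:ℝ)/18) :=
              Real.rpow_le_rpow_of_exponent_le (by norm_num) (by norm_num)
            have h2 : (16:ℝ) ^ ((5:ℝ)/18) ≤ X ^ ((5:ℝ)/18) :=
              Real.rpow_le_rpow (by norm_num) hX16 (by norm_num)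
            have h3 : (16:ℝ) ^ ((1:ℝ)/4) = 2 := by
              rw [show (16:ℝ) = 2 ^ (4:ℕ) by norm_num, ← Real.rpow_natCast 2 4,
                ← Real.rpow_mul (by norm_num)]
              norm_num
            linarith
          have : X ^ ((11:ℝ)/9) = X ^ ((17:ℝ)/18) * X ^ ((5:ℝ)/18) := by
            rw [← Real.rpow_add hXpos]; norm_num
          rw [this]
          have hx17 : (0:ℝ) ≤ X ^ ((17:ℝ)/18) := Real.rpow_nonneg hX0 _
          nlinarith
      _ ≤ (X/2)^2 * (Y/2)^2 * w := by
          rw [hprod]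
          calc (1:ℝ)/256 * X ^ ((11:ℝ)/9)
              = (1/16 * X ^ ((11:ℝ)/3)) * (1/16 * X ^ (-(22:ℝ)/9)) := by
                rw [mul_mul_mul_comm, ← Real.rpow_add hXpos]; norm_num
            _ ≤ (1/16 * X ^ ((11:ℝ)/3)) * w := by
                apply mul_le_mul_of_nonneg_left _ (by positivity)
                rw [← hXw]; exact hw16
  calc (1:ℝ)/512 * U^2 * V ≤ (X/2)^2 * (Y/2)^2 * w := hmain
    _ ≤ (B.card : ℝ) * w := mul_le_mul_of_nonneg_right hcardB hwpos.le
    _ ≤ J U V n := hJge
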